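/- arXiv:1805.08354 — 2 statements merged into one kernel-verified Lean document; each statement's English description precedes it below -/
import Mathlib

section
/- Let U ⊆ ℂ be open and let f be holomorphic on U with |f(z)| < 1 and f'(z) ≠ 0 for all z ∈ U. Then the function u(z) = log(|f'(z)|/(1 − |f(z)|²)) satisfies Δu(z) = (2|f'(z)|/(1 − |f(z)|²))² for every z ∈ U. -/
open Complex

private lemma hasDerivAt_re_comp {F : ℝ → ℂ} {F' : ℂ} {t : ℝ} (hF : HasDerivAt F F' t) :
    HasDerivAt (fun s => (F s).re) F'.re t := by
  simpa [Function.comp_def] using Complex.reCLM.hasFDerivAt.comp_hasDerivAt t hF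

private lemma hasDerivAt_im_comp {F : ℝ → ℂ} {F' : ℂ} {t : ℝ} (hF : HasDerivAt F F' t) :
    HasDerivAt (fun s => (F s).im) F'.im t := by
  simpa [Function.comp_def] using Complex.imCLM.hasFDerivAt.comp_hasDerivAt t hF

private lemma hasDerivAt_conj_comp {F : ℝ → ℂ} {F' : ℂ} {t : ℝ} (hF : HasDerivAt F F' t) :
    HasDerivAt (fun s => (starRingEnd ℂ) (F s)) ((starRingEnd ℂ) F') t := by
  simpa [Function.comp_def] using
    Complex.conjCLE.toContinuousLinearMap.hasFDerivAt.comp_hasDerivAt t hF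

private lemma hasDerivAt_normSq_comp {F : ℝ → ℂ} {F' : ℂ} {t : ℝ} (hF : HasDerivAt F F' t) :
    HasDerivAt (fun s => Complex.normSq (F s)) (2 * ((starRingEnd ℂ) (F t) * F').re) t := by
  have hre := hasDerivAt_re_comp hF
  have him := hasDerivAt_im_comp hF
  have h : HasDerivAt (fun s => (F s).re * (F s).re + (F s).im * (F s).im) _ t :=
    (hre.mul hre).add (him.mul him)
  have hfun : (fun s => (F s).re * (F s).re + (F s).im * (F s).im)
      = fun s => Complex.normSq (F s) := by
    funext s; simp [Complex.normSq_apply]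
  rw [hfun] at h
  convert h using 1
  simp [Complex.mul_re, Complex.conj_re, Complex.conj_im]
  ring

/-- The second derivative of `log(|f'|/(1-|f|²))` along the line `t ↦ t•e + c`. -/
noncomputable def SD (f : ℂ → ℂ) (e w : ℂ) : ℝ :=
  (((starRingEnd ℂ) (e * deriv (deriv f) w) * (e * deriv (deriv f) w)
      + (starRingEnd ℂ) (deriv f w) * (e * (e * deriv (deriv (deriv f)) w))).re
      * Complex.normSq (deriv f w)
    - ((starRingEnd ℂ) (deriv f w) * (e * deriv (deriv f) w)).re
      * (2 * ((starRingEnd ℂ) (deriv f w) * (e * deriv (deriv f) w)).re))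
    / (Complex.normSq (deriv f w)) ^ 2
  + ((2 * ((starRingEnd ℂ) (e * deriv f w) * (e * deriv f w)
      + (starRingEnd ℂ) (f w) * (e * (e * deriv (deriv f) w))).re)
      * (1 - Complex.normSq (f w))
    - (2 * ((starRingEnd ℂ) (f w) * (e * deriv f w)).re)
      * (-(2 * ((starRingEnd ℂ) (f w) * (e * deriv f w)).re)))
    / (1 - Complex.normSq (f w)) ^ 2

private lemma key (U : Set ℂ) (hU : IsOpen U) (f : ℂ → ℂ)
    (hf : DifferentiableOn ℂ f U)
    (hfb : ∀ z ∈ U, ‖f z‖ < 1)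
    (hf' : ∀ z ∈ U, deriv f z ≠ 0)
    (e c : ℂ) (t₀ : ℝ) (hw : ((t₀ : ℂ) * e + c) ∈ U) :
    deriv (deriv (fun t : ℝ =>
        Real.log (‖deriv f ((t : ℂ) * e + c)‖ /
          (1 - ‖f ((t : ℂ) * e + c)‖ ^ 2)))) t₀
      = SD f e ((t₀ : ℂ) * e + c) := by
  have hA : AnalyticOnNhd ℂ f U := hf.analyticOnNhd hU
  have hAG : AnalyticOnNhd ℂ (deriv f) U := hA.deriv
  have hAH : AnalyticOnNhd ℂ (deriv (deriv f)) U := hAG.deriv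
  set V : Set ℝ := (fun t : ℝ => (t : ℂ) * e + c) ⁻¹' U with hVdef
  have hLcont : Continuous (fun t : ℝ => (t : ℂ) * e + c) :=
    (Complex.continuous_ofReal.mul continuous_const).add continuous_const
  have hV : IsOpen V := hU.preimage hLcont
  have ht₀ : t₀ ∈ V := hw
  -- basic line derivative
  have hLd : ∀ t : ℝ, HasDerivAt (fun t : ℝ => (t : ℂ) * e + c) e t := fun t => by
    simpa using ((Complex.ofRealCLM.hasDerivAt (x := t)).mul_const e).add_const c
  -- positivity facts
  have hQpos : ∀ w ∈ U, (0 : ℝ) < 1 - Complex.normSq (f w) := by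
    intro w hwU
    have h1 := hfb w hwU
    have h2 := norm_nonneg (f w)
    have h3 : Complex.normSq (f w) = ‖f w‖ ^ 2 := (Complex.sq_norm _).symm
    nlinarith
  have hPpos : ∀ w ∈ U, (0 : ℝ) < Complex.normSq (deriv f w) := fun w hwU =>
    Complex.normSq_pos.mpr (hf' w hwU)
  -- compositions along the line, at any point of V
  have hfL : ∀ t ∈ V, HasDerivAt (fun s : ℝ => f ((s : ℂ) * e + c))
      (e * deriv f ((t : ℂ) * e + c)) t := by
    intro t ht
    have hfd : HasDerivAt f (deriv f ((t : ℂ) * e + c)) ((t : ℂ) * e + c) :=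
      (hf.differentiableAt (hU.mem_nhds ht)).hasDerivAt
    simpa [Function.comp_def, smul_eq_mul] using hfd.scomp t (hLd t)
  have hGL : ∀ t ∈ V, HasDerivAt (fun s : ℝ => deriv f ((s : ℂ) * e + c))
      (e * deriv (deriv f) ((t : ℂ) * e + c)) t := by
    intro t ht
    have hfd : HasDerivAt (deriv f) (deriv (deriv f) ((t : ℂ) * e + c)) ((t : ℂ) * e + c) :=
      ((hAG _ ht).differentiableAt).hasDerivAt
    simpa [Function.comp_def, smul_eq_mul] using hfd.scomp t (hLd t)
  have hHL : ∀ t ∈ V, HasDerivAt (fun s : ℝ => deriv (deriv f) ((s : ℂ) * e + c))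
      (e * deriv (deriv (deriv f)) ((t : ℂ) * e + c)) t := by
    intro t ht
    have hfd : HasDerivAt (deriv (deriv f)) (deriv (deriv (deriv f)) ((t : ℂ) * e + c))
        ((t : ℂ) * e + c) := ((hAH _ ht).differentiableAt).hasDerivAt
    simpa [Function.comp_def, smul_eq_mul] using hfd.scomp t (hLd t)
  -- the first derivative formula
  set ψ : ℝ → ℝ := fun t =>
    ((starRingEnd ℂ) (deriv f ((t : ℂ) * e + c)) * (e * deriv (deriv f) ((t : ℂ) * e + c))).re
      / Complex.normSq (deriv f ((t : ℂ) * e + c))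
    + 2 * ((starRingEnd ℂ) (f ((t : ℂ) * e + c)) * (e * deriv f ((t : ℂ) * e + c))).re
      / (1 - Complex.normSq (f ((t : ℂ) * e + c))) with hψdef
  have hder : ∀ t ∈ V, HasDerivAt (fun t : ℝ =>
      Real.log (‖deriv f ((t : ℂ) * e + c)‖ /
        (1 - ‖f ((t : ℂ) * e + c)‖ ^ 2))) (ψ t) t := by
    intro t ht
    have hP : Complex.normSq (deriv f ((t : ℂ) * e + c)) ≠ 0 := (hPpos _ ht).ne'
    have hQ : (1 : ℝ) - Complex.normSq (f ((t : ℂ) * e + c)) ≠ 0 := (hQpos _ ht).ne'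
    have hNG := hasDerivAt_normSq_comp (hGL t ht)
    have hNf := hasDerivAt_normSq_comp (hfL t ht)
    have h1 := (hNG.log hP).const_mul (1/2 : ℝ)
    have h3 := ((hNf.const_sub 1).log hQ)
    have hχ : HasDerivAt (fun s : ℝ =>
        1/2 * Real.log (Complex.normSq (deriv f ((s : ℂ) * e + c)))
        - Real.log (1 - Complex.normSq (f ((s : ℂ) * e + c)))) (ψ t) t := by
      refine (h1.sub h3).congr_deriv ?_
      rw [hψdef]
      field_simp
      ring
    refine hχ.congr_of_eventuallyEq ?_
    filter_upwards [hV.mem_nhds ht] with s hs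
    have habs : ‖deriv f ((s : ℂ) * e + c)‖ ≠ 0 :=
      norm_ne_zero_iff.mpr (hf' _ hs)
    have hQ2 : (1 : ℝ) - ‖f ((s : ℂ) * e + c)‖ ^ 2 ≠ 0 := by
      rw [Complex.sq_norm]; exact (hQpos _ hs).ne'
    rw [Real.log_div habs hQ2, Complex.sq_norm]
    have hlog : Real.log (‖deriv f ((s : ℂ) * e + c)‖)
        = 1/2 * Real.log (Complex.normSq (deriv f ((s : ℂ) * e + c))) := by
      rw [Complex.normSq_eq_norm_sq, Real.log_pow]
      push_cast; ring
    rw [hlog]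
  have hev : deriv (fun t : ℝ =>
      Real.log (‖deriv f ((t : ℂ) * e + c)‖ /
        (1 - ‖f ((t : ℂ) * e + c)‖ ^ 2))) =ᶠ[nhds t₀] ψ := by
    filter_upwards [hV.mem_nhds ht₀] with s hs
    exact (hder s hs).deriv
  rw [hev.deriv_eq]
  -- second derivative computation
  have hP : Complex.normSq (deriv f ((t₀ : ℂ) * e + c)) ≠ 0 := (hPpos _ hw).ne'
  have hQ : (1 : ℝ) - Complex.normSq (f ((t₀ : ℂ) * e + c)) ≠ 0 := (hQpos _ hw).ne'
  have hconjG := hasDerivAt_conj_comp (hGL t₀ ht₀)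
  have hconjf := hasDerivAt_conj_comp (hfL t₀ ht₀)
  have hEH : HasDerivAt (fun s : ℝ => e * deriv (deriv f) ((s : ℂ) * e + c))
      (e * (e * deriv (deriv (deriv f)) ((t₀ : ℂ) * e + c))) t₀ :=
    (hHL t₀ ht₀).const_mul e
  have hEG : HasDerivAt (fun s : ℝ => e * deriv f ((s : ℂ) * e + c))
      (e * (e * deriv (deriv f) ((t₀ : ℂ) * e + c))) t₀ :=
    (hGL t₀ ht₀).const_mul e
  have hnum1 := hasDerivAt_re_comp (hconjG.mul hEH)
  have hnum2 := (hasDerivAt_re_comp (hconjf.mul hEG)).const_mul (2 : ℝ)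
  have hNG := hasDerivAt_normSq_comp (hGL t₀ ht₀)
  have hNf := hasDerivAt_normSq_comp (hfL t₀ ht₀)
  have hdiv1 := hnum1.div hNG hP
  have hdiv2 := hnum2.div (hNf.const_sub 1) hQ
  have hfinal := (hdiv1.add hdiv2).deriv
  rw [hψdef]
  convert hfinal using 2
  rfl
  rfl
/-- For `f` holomorphic on an open set `U ⊆ ℂ` with `|f| < 1` and `f' ≠ 0` on `U`, the
function `u(z) = log (|f'(z)|/(1 − |f(z)|²))` satisfies
`Δu(z) = ∂²u/∂x² + ∂²u/∂y² = (2|f'(z)|/(1 − |f(z)|²))²` on `U`. -/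
theorem laplacian_log_pullback_density
    (U : Set ℂ) (hU : IsOpen U) (f : ℂ → ℂ)
    (hf : DifferentiableOn ℂ f U)
    (hfb : ∀ z ∈ U, ‖f z‖ < 1)
    (hf' : ∀ z ∈ U, deriv f z ≠ 0) :
    ∀ z ∈ U,
      deriv (deriv (fun x : ℝ =>
          Real.log (‖deriv f ((x : ℂ) + z.im * Complex.I)‖ /
            (1 - ‖f ((x : ℂ) + z.im * Complex.I)‖ ^ 2)))) z.re +
      deriv (deriv (fun y : ℝ =>
          Real.log (‖deriv f ((z.re : ℂ) + y * Complex.I)‖ /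
            (1 - ‖f ((z.re : ℂ) + y * Complex.I)‖ ^ 2)))) z.im =
      (2 * ‖deriv f z‖ / (1 - ‖f z‖ ^ 2)) ^ 2 := by
  intro z hz
  have hx1 : (fun x : ℝ => Real.log (‖deriv f ((x : ℂ) + z.im * Complex.I)‖ /
        (1 - ‖f ((x : ℂ) + z.im * Complex.I)‖ ^ 2)))
      = fun x : ℝ => Real.log (‖deriv f ((x : ℂ) * 1 + (z.im : ℂ) * Complex.I)‖ /
        (1 - ‖f ((x : ℂ) * 1 + (z.im : ℂ) * Complex.I)‖ ^ 2)) := by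
    funext x; rw [mul_one]
  have hy1 : (fun y : ℝ => Real.log (‖deriv f ((z.re : ℂ) + y * Complex.I)‖ /
        (1 - ‖f ((z.re : ℂ) + y * Complex.I)‖ ^ 2)))
      = fun y : ℝ => Real.log (‖deriv f ((y : ℂ) * Complex.I + (z.re : ℂ))‖ /
        (1 - ‖f ((y : ℂ) * Complex.I + (z.re : ℂ))‖ ^ 2)) := by
    funext y; rw [add_comm]
  have e1 : ((z.re : ℂ) * 1 + (z.im : ℂ) * Complex.I) = z := by
    rw [mul_one]; exact Complex.re_add_im z
  have e2 : ((z.im : ℂ) * Complex.I + (z.re : ℂ)) = z := by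
    rw [add_comm]; exact Complex.re_add_im z
  have h1 := key U hU f hf hfb hf' 1 ((z.im : ℂ) * Complex.I) z.re (by rw [e1]; exact hz)
  have h2 := key U hU f hf hfb hf' Complex.I ((z.re : ℂ)) z.im (by rw [e2]; exact hz)
  rw [hx1, hy1, h1, h2, e1, e2]
  have hP : Complex.normSq (deriv f z) ≠ 0 := (Complex.normSq_pos.mpr (hf' z hz)).ne'
  have hQ : (1 : ℝ) - Complex.normSq (f z) ≠ 0 := by
    nlinarith [Complex.sq_norm (f z), hfb z hz, norm_nonneg (f z)]
  rw [div_pow, mul_pow, Complex.sq_norm, Complex.sq_norm]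
  unfold SD
  simp only [Complex.mul_re, Complex.mul_im, Complex.conj_re, Complex.conj_im,
    Complex.I_re, Complex.I_im, Complex.one_re, Complex.one_im, Complex.normSq_apply,
    Complex.add_re, Complex.add_im, Complex.re_ofNat, Complex.im_ofNat]
  simp only [Complex.normSq_apply] at hP hQ
  field_simp
  ring
end

section
/- Let Ω be an open subset of the open unit disc 𝔻 = {z ∈ ℂ : |z| < 1} and let φ be holomorphic on Ω with |φ(z)| < 1 and φ'(z) ≠ 0 for all z ∈ Ω. If the function z ↦ M(φ; z) attains a local minimum at a point z₀ ∈ Ω, then M(φ; z₀) ≥ 1. -/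
open Metric


/-- Derivative of a holomorphic function along a real line. -/
lemma hasDerivAt_line {F : ℂ → ℂ} {F' : ℂ} (z₀ v : ℂ) {t : ℝ}
    (hF : HasDerivAt F F' (z₀ + t * v)) :
    HasDerivAt (fun s : ℝ => F (z₀ + s * v)) (F' * v) t := by
  have hline : HasDerivAt (fun s : ℝ => z₀ + (s : ℂ) * v) v t := by
    simpa using (Complex.ofRealCLM.hasDerivAt.mul_const v).const_add z₀
  have := (hF.hasFDerivAt.restrictScalars ℝ).comp_hasDerivAt t hline
  simpa [smul_eq_mul, mul_comm, Function.comp_def] using this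

lemma HasDerivAt.complex_re {g : ℝ → ℂ} {d : ℂ} {t : ℝ} (hg : HasDerivAt g d t) :
    HasDerivAt (fun s => (g s).re) d.re t :=
  Complex.reCLM.hasFDerivAt.comp_hasDerivAt t hg

lemma HasDerivAt.complex_conj {g : ℝ → ℂ} {d : ℂ} {t : ℝ} (hg : HasDerivAt g d t) :
    HasDerivAt (fun s => (starRingEnd ℂ) (g s)) ((starRingEnd ℂ) d) t :=
  Complex.conjCLE.toContinuousLinearMap.hasFDerivAt.comp_hasDerivAt t hg

lemma hasDerivAt_abs_sq {g : ℝ → ℂ} {d : ℂ} {t : ℝ} (hg : HasDerivAt g d t) :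
    HasDerivAt (fun s => ‖g s‖ ^ 2) (2 * (d * (starRingEnd ℂ) (g t)).re) t := by
  have h : HasDerivAt (fun s => (g s * (starRingEnd ℂ) (g s)).re)
      (d * (starRingEnd ℂ) (g t) + g t * (starRingEnd ℂ) d).re t :=
    (hg.mul hg.complex_conj).complex_re
  have he : (fun s => ‖g s‖ ^ 2) = fun s => (g s * (starRingEnd ℂ) (g s)).re := by
    funext s
    rw [Complex.mul_conj]
    simp [Complex.sq_norm]
  rw [he]
  convert h using 1
  simp [Complex.add_re, Complex.mul_re, Complex.conj_re, Complex.conj_im]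
  ring


lemma local_min_second_deriv_nonneg {f f₁ : ℝ → ℝ} {m : ℝ}
    (hf : ∀ᶠ t in nhds (0:ℝ), HasDerivAt f (f₁ t) t)
    (hf₁ : HasDerivAt f₁ m 0)
    (hmin : IsLocalMin f 0) : 0 ≤ m := by
  by_contra hm
  push_neg at hm
  have h0 : f₁ 0 = 0 := hmin.hasDerivAt_eq_zero (hf.self_of_nhds)
  have hs := hasDerivAt_iff_tendsto_slope.1 hf₁
  have hneg : ∀ᶠ t in nhdsWithin (0:ℝ) (Set.Ioi 0), f₁ t < 0 := by
    have h1 : ∀ᶠ t in nhdsWithin (0:ℝ) {(0:ℝ)}ᶜ, slope f₁ 0 t < m / 2 :=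
      hs.eventually (eventually_lt_nhds (by linarith))
    have h2 : nhdsWithin (0:ℝ) (Set.Ioi 0) ≤ nhdsWithin (0:ℝ) {(0:ℝ)}ᶜ :=
      nhdsWithin_mono _ (fun x hx => ne_of_gt hx)
    filter_upwards [h2 h1, self_mem_nhdsWithin] with t ht ht0
    have hts : slope f₁ 0 t = f₁ t / t := by
      rw [slope_def_field, h0]; ring
    rw [hts] at ht
    have htpos : (0:ℝ) < t := ht0
    nlinarith [(div_lt_iff₀ htpos).1 ht]
  obtain ⟨δ₁, hδ₁pos, hδ₁⟩ := Metric.eventually_nhds_iff_ball.1 hf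
  obtain ⟨δ₂, hδ₂pos, hδ₂⟩ := Metric.mem_nhdsWithin_iff.1 hneg
  obtain ⟨δ₃, hδ₃pos, hδ₃⟩ := Metric.eventually_nhds_iff_ball.1 hmin
  set δ : ℝ := min (min δ₁ δ₂) δ₃ / 2 with hδdef
  have hδpos : 0 < δ := by positivity
  have hδ1 : δ < δ₁ := by
    have := min_le_left (min δ₁ δ₂) δ₃
    have := min_le_left δ₁ δ₂
    simp only [hδdef]; linarith
  have hδ2 : δ < δ₂ := by
    have := min_le_left (min δ₁ δ₂) δ₃
    have := min_le_right δ₁ δ₂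
    simp only [hδdef]; linarith
  have hδ3 : δ < δ₃ := by
    have := min_le_right (min δ₁ δ₂) δ₃
    simp only [hδdef]; linarith
  have hanti : StrictAntiOn f (Set.Icc 0 δ) := by
    apply strictAntiOn_of_deriv_neg (convex_Icc 0 δ)
    · intro x hx
      exact (hδ₁ x (by
        simp only [Metric.mem_ball, Real.dist_eq]
        rw [sub_zero, _root_.abs_of_nonneg hx.1]; linarith [hx.2])).continuousAt.continuousWithinAt
    · intro x hx
      rw [interior_Icc] at hx
      have hx1 : x ∈ Metric.ball (0:ℝ) δ₁ := by
        simp only [Metric.mem_ball, Real.dist_eq]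
        rw [sub_zero, _root_.abs_of_nonneg (le_of_lt hx.1)]; linarith [hx.2]
      rw [(hδ₁ x hx1).deriv]
      apply hδ₂
      constructor
      · simp only [Metric.mem_ball, Real.dist_eq]
        rw [sub_zero, _root_.abs_of_nonneg (le_of_lt hx.1)]; linarith [hx.2]
      · exact hx.1
  have hlt : f δ < f 0 := hanti (by constructor <;> simp [le_of_lt hδpos]) ⟨le_of_lt hδpos, le_refl δ⟩ hδpos
  have hge : f 0 ≤ f δ := hδ₃ δ (by
    simp only [Metric.mem_ball, Real.dist_eq]
    rw [sub_zero, _root_.abs_of_nonneg (le_of_lt hδpos)]; linarith)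
  linarith

/-- For a holomorphic map `f` into the unit disc, `M(f; z) = |f'(z)| (1 − |z|²) / (1 − |f(z)|²)`. -/
noncomputable def MQ (f : ℂ → ℂ) (z : ℂ) : ℝ :=
  ‖deriv f z‖ * (1 - ‖z‖ ^ 2) / (1 - ‖f z‖ ^ 2)

set_option maxHeartbeats 4000000

theorem M_local_min_ge_one
    (Ω : Set ℂ) (hΩopen : IsOpen Ω) (hΩsub : Ω ⊆ ball (0 : ℂ) 1)
    (φ : ℂ → ℂ) (hφdiff : DifferentiableOn ℂ φ Ω)
    (hφbound : ∀ z ∈ Ω, ‖φ z‖ < 1)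
    (hφ' : ∀ z ∈ Ω, deriv φ z ≠ 0)
    (z₀ : ℂ) (hz₀ : z₀ ∈ Ω)
    (hmin : IsLocalMinOn (fun z => MQ φ z) Ω z₀) :
    1 ≤ MQ φ z₀ := by
  have hA : AnalyticOnNhd ℂ φ Ω := hφdiff.analyticOnNhd hΩopen
  have hA1 : AnalyticOnNhd ℂ (deriv φ) Ω := hA.deriv
  have hA2 : AnalyticOnNhd ℂ (deriv (deriv φ)) Ω := hA1.deriv
  set c : ℂ := deriv φ z₀ with hc_def
  set p : ℂ := φ z₀ with hp_def
  have hc0 : c ≠ 0 := hφ' z₀ hz₀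
  have hp1 : ‖p‖ < 1 := hφbound z₀ hz₀
  have hz01 : ‖z₀‖ < 1 := by simpa using hΩsub hz₀
  -- find a ball around z₀ with good properties
  have hcont : ContinuousAt (fun z => (deriv φ z / c).re) z₀ :=
    Complex.continuous_re.continuousAt.comp
      (((hA1 z₀ hz₀).differentiableAt.continuousAt).div_const c)
  have hval : (deriv φ z₀ / c).re = 1 := by rw [← hc_def, div_self hc0]; simp
  have hev : ∀ᶠ z in nhds z₀, 0 < (deriv φ z / c).re := by
    have h01 : (0:ℝ) < (fun z => (deriv φ z / c).re) z₀ := by simpa [hval] using one_pos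
    exact hcont.eventually (eventually_gt_nhds h01)
  obtain ⟨r, hrpos, hrball⟩ := Metric.mem_nhds_iff.1
    (Filter.inter_mem (hΩopen.mem_nhds hz₀) hev)
  have hballΩ : ∀ z ∈ ball z₀ r, z ∈ Ω := fun z hz => (hrball hz).1
  have hballre : ∀ z ∈ ball z₀ r, 0 < (deriv φ z / c).re := fun z hz => (hrball hz).2
  -- the logarithm of deriv φ / c
  set L : ℂ → ℂ := fun z => Complex.log (deriv φ z / c) with hL_def
  have hL : ∀ z ∈ ball z₀ r, HasDerivAt L (deriv (deriv φ) z / deriv φ z) z := by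
    intro z hz
    have hz' : deriv φ z ≠ 0 := hφ' z (hballΩ z hz)
    have hd : HasDerivAt (fun w => deriv φ w / c) (deriv (deriv φ) z / c) z :=
      ((hA1 z (hballΩ z hz)).differentiableAt.hasDerivAt).div_const c
    have := hd.clog (Or.inl (hballre z hz))
    convert this using 1
    field_simp
  have hLre : ∀ z ∈ ball z₀ r,
      (L z).re = Real.log (‖deriv φ z‖) - Real.log (‖c‖) := by
    intro z hz
    have hz' : deriv φ z ≠ 0 := hφ' z (hballΩ z hz)
    rw [hL_def]
    simp only [Complex.log_re, norm_div]
    rw [Real.log_div (by simpa using hz') (by simpa using hc0)]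
  -- second complex derivative data
  have hΛdiff : DifferentiableAt ℂ (fun z => deriv (deriv φ) z / deriv φ z) z₀ :=
    (hA2 z₀ hz₀).differentiableAt.div (hA1 z₀ hz₀).differentiableAt (hφ' z₀ hz₀)
  set Λ : ℂ := deriv (fun z => deriv (deriv φ) z / deriv φ z) z₀ with hΛ_def
  have hΛ : HasDerivAt (fun z => deriv (deriv φ) z / deriv φ z) Λ z₀ := hΛdiff.hasDerivAt
  set c₀ : ℝ := 1 - ‖z₀‖ ^ 2 with hc₀_def
  set p₀ : ℝ := 1 - ‖p‖ ^ 2 with hp₀_def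
  have hc₀pos : 0 < c₀ := by nlinarith [norm_nonneg z₀]
  have hp₀pos : 0 < p₀ := by nlinarith [norm_nonneg p]
  have hcabs : 0 < ‖c‖ := by simpa using hc0
  set Q : ℂ := deriv (deriv φ) z₀ with hQ_def
  have key : ∀ v : ℂ, ‖v‖ = 1 →
      0 ≤ (Λ * v ^ 2).re + (-2 * c₀ - 4 * ((z₀ * (starRingEnd ℂ) v).re) ^ 2) / c₀ ^ 2 +
        ((2 * ((Q * v ^ 2) * (starRingEnd ℂ) p).re + 2 * ‖c‖ ^ 2) * p₀ +
          (2 * ((c * v) * (starRingEnd ℂ) p).re) ^ 2) / p₀ ^ 2 := by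
    intro v hv
    set ℓ : ℝ → ℂ := fun s => z₀ + s * v with hℓ_def
    have hℓ0 : ℓ 0 = z₀ := by simp [hℓ_def]
    have hball : ∀ t : ℝ, |t| < r → ℓ t ∈ ball z₀ r := by
      intro t ht
      simp only [hℓ_def, Metric.mem_ball, Complex.dist_eq, add_sub_cancel_left]
      rw [norm_mul, hv, mul_one, Complex.norm_real, Real.norm_eq_abs]
      exact ht
    set b : ℝ := (z₀ * (starRingEnd ℂ) v).re with hb_def
    set P : ℝ → ℝ := fun t => c₀ - 2 * b * t - t ^ 2 with hP_def
    have habs_line : ∀ t : ℝ, ‖ℓ t‖ ^ 2 = ‖z₀‖ ^ 2 + 2 * b * t + t ^ 2 := by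
      intro t
      rw [Complex.sq_norm, hℓ_def]
      simp only
      rw [Complex.normSq_add]
      have h1 : Complex.normSq ((t : ℂ) * v) = t ^ 2 := by
        rw [Complex.normSq_mul, Complex.normSq_ofReal, ← Complex.sq_norm v, hv]
        ring
      have h2 : (z₀ * (starRingEnd ℂ) ((t:ℂ) * v)).re = t * b := by
        rw [map_mul, Complex.conj_ofReal]
        have : z₀ * ((t:ℂ) * (starRingEnd ℂ) v) = (t:ℂ) * (z₀ * (starRingEnd ℂ) v) := by ring
        rw [this, Complex.re_ofReal_mul, hb_def]
      rw [h1, h2, ← Complex.sq_norm z₀]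
      ring
    have hPeq : ∀ t : ℝ, P t = 1 - ‖ℓ t‖ ^ 2 := by
      intro t
      rw [hP_def]
      simp only
      rw [habs_line t, hc₀_def]
      ring
    have hPpos : ∀ t : ℝ, |t| < r → 0 < P t := by
      intro t ht
      rw [hPeq t]
      have : ‖ℓ t‖ < 1 := by simpa using hΩsub (hballΩ _ (hball t ht))
      nlinarith [norm_nonneg (ℓ t)]
    set w : ℝ → ℝ := fun t => ‖φ (ℓ t)‖ ^ 2 with hw_def
    have hwpos : ∀ t : ℝ, |t| < r → 0 < 1 - w t := by
      intro t ht
      have : ‖φ (ℓ t)‖ < 1 := hφbound _ (hballΩ _ (hball t ht))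
      simp only [hw_def]
      nlinarith [norm_nonneg (φ (ℓ t))]
    set G : ℝ → ℝ := fun t =>
      (L (ℓ t)).re + Real.log (‖c‖) + Real.log (P t) - Real.log (1 - w t) with hG_def
    set w1 : ℝ → ℝ := fun t =>
      2 * ((deriv φ (ℓ t) * v) * (starRingEnd ℂ) (φ (ℓ t))).re with hw1_def
    set G1 : ℝ → ℝ := fun t =>
      ((deriv (deriv φ) (ℓ t) / deriv φ (ℓ t)) * v).re + (-(2*b) - 2*t) / P t
        + w1 t / (1 - w t) with hG1_def
    -- derivative facts along the line, for |t| < r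
    have hφline : ∀ t : ℝ, |t| < r → HasDerivAt (fun s : ℝ => φ (ℓ s)) (deriv φ (ℓ t) * v) t := by
      intro t ht
      exact hasDerivAt_line z₀ v ((hA _ (hballΩ _ (hball t ht))).differentiableAt.hasDerivAt)
    have hwline : ∀ t : ℝ, |t| < r → HasDerivAt w (w1 t) t := by
      intro t ht
      exact hasDerivAt_abs_sq (hφline t ht)
    have hPline : ∀ t : ℝ, HasDerivAt P (-(2*b) - 2*t) t := by
      intro t
      have h1 : HasDerivAt (fun s : ℝ => c₀ - 2*b*s - s^2) (0 - 2*b*1 - 2*t) t := by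
        exact (((hasDerivAt_const t c₀).sub ((hasDerivAt_id t).const_mul (2*b))).sub
          (hasDerivAt_pow 2 t)).congr_deriv (by push_cast; ring)
      exact h1.congr_deriv (by ring)
    have hG1ev : ∀ t : ℝ, |t| < r → HasDerivAt G (G1 t) t := by
      intro t ht
      have hg1 : HasDerivAt (fun s : ℝ => (L (ℓ s)).re)
          (((deriv (deriv φ) (ℓ t) / deriv φ (ℓ t)) * v).re) t :=
        (hasDerivAt_line z₀ v (hL _ (hball t ht))).complex_re
      have hg3 : HasDerivAt (fun s : ℝ => Real.log (P s)) ((-(2*b) - 2*t) / P t) t :=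
        (hPline t).log (ne_of_gt (hPpos t ht))
      have hg4 : HasDerivAt (fun s : ℝ => Real.log (1 - w s)) ((-(w1 t)) / (1 - w t)) t := by
        have := ((hwline t ht).const_sub 1).log (ne_of_gt (hwpos t ht))
        exact this
      have := ((hg1.add_const (Real.log (‖c‖))).add hg3).sub hg4
      rw [hG_def, hG1_def]
      refine this.congr_deriv ?_
      ring
    -- second derivative of G1 at 0
    have hΛ' : HasDerivAt (fun z => deriv (deriv φ) z / deriv φ z) Λ (ℓ 0) := by
      rw [hℓ0]; exact hΛ
    have hm1 : HasDerivAt (fun s : ℝ => ((deriv (deriv φ) (ℓ s) / deriv φ (ℓ s)) * v).re)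
        ((Λ * v ^ 2).re) 0 := by
      have := ((hasDerivAt_line z₀ v hΛ').mul_const v).complex_re
      convert this using 2
      ring
    have hm2 : HasDerivAt (fun s : ℝ => (-(2*b) - 2*s) / P s)
        ((-2 * c₀ - 4 * b ^ 2) / c₀ ^ 2) 0 := by
      have hnum : HasDerivAt (fun s : ℝ => -(2*b) - 2*s) (-2) 0 := by
        have := ((hasDerivAt_id (0:ℝ)).const_mul 2).const_sub (-(2*b))
        exact this.congr_deriv (by ring)
      have hP0 : P 0 = c₀ := by rw [hP_def]; simp
      have := hnum.div (hPline 0) (by rw [hP0]; exact ne_of_gt hc₀pos)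
      refine this.congr_deriv ?_
      rw [hP0]
      ring
    have hφ'line0 : HasDerivAt (fun s : ℝ => deriv φ (ℓ s)) (Q * v) 0 := by
      have hq : HasDerivAt (deriv φ) Q (ℓ 0) := by
        rw [hℓ0]; exact (hA1 z₀ hz₀).differentiableAt.hasDerivAt
      exact hasDerivAt_line z₀ v hq
    have hφline0 : HasDerivAt (fun s : ℝ => φ (ℓ s)) (c * v) 0 := by
      have := hφline 0 (by simpa using hrpos)
      rw [hℓ0] at this
      exact this
    have hw1' : HasDerivAt w1 (2 * ((Q * v ^ 2) * (starRingEnd ℂ) p).re + 2 * ‖c‖ ^ 2) 0 := by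
      have hd : HasDerivAt (fun s : ℝ => deriv φ (ℓ s) * v) (Q * v * v) 0 :=
        hφ'line0.mul_const v
      have hconj : HasDerivAt (fun s : ℝ => (starRingEnd ℂ) (φ (ℓ s)))
          ((starRingEnd ℂ) (c * v)) 0 := hφline0.complex_conj
      have := ((hd.mul hconj).complex_re).const_mul 2
      rw [hw1_def]
      refine this.congr_deriv ?_
      rw [hℓ0]
      have h1 : (Q * v * v * (starRingEnd ℂ) (φ z₀) + deriv φ z₀ * v * (starRingEnd ℂ) (c * v)).re
          = (Q * v ^ 2 * (starRingEnd ℂ) p).re + ((c * v) * (starRingEnd ℂ) (c * v)).re := by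
        rw [← hp_def, ← hc_def]
        rw [Complex.add_re]
        congr 1
        · congr 1; ring
      rw [h1]
      have h2 : ((c * v) * (starRingEnd ℂ) (c * v)).re = ‖c‖ ^ 2 := by
        rw [Complex.mul_conj]
        simp only [Complex.ofReal_re]
        rw [← Complex.sq_norm, norm_mul, hv]
        ring
      rw [h2]
      ring
    have hw0 : w 0 = ‖p‖ ^ 2 := by rw [hw_def]; simp only; rw [hℓ0, ← hp_def]
    have hw10 : w1 0 = 2 * ((c * v) * (starRingEnd ℂ) p).re := by
      rw [hw1_def]; simp only; rw [hℓ0, ← hc_def, ← hp_def]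
    have hm3 : HasDerivAt (fun s : ℝ => w1 s / (1 - w s))
        (((2 * ((Q * v ^ 2) * (starRingEnd ℂ) p).re + 2 * ‖c‖ ^ 2) * p₀ +
          (2 * ((c * v) * (starRingEnd ℂ) p).re) ^ 2) / p₀ ^ 2) 0 := by
      have hwden : HasDerivAt (fun s : ℝ => 1 - w s) (-(w1 0)) 0 :=
        (hwline 0 (by simpa using hrpos)).const_sub 1
      have hne : (1:ℝ) - w 0 ≠ 0 := ne_of_gt (hwpos 0 (by simpa using hrpos))
      have := hw1'.div hwden hne
      refine this.congr_deriv ?_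
      rw [hw0, hw10, ← hp₀_def]
      ring
    have hG2 : HasDerivAt G1
        ((Λ * v ^ 2).re + (-2 * c₀ - 4 * b ^ 2) / c₀ ^ 2 +
          ((2 * ((Q * v ^ 2) * (starRingEnd ℂ) p).re + 2 * ‖c‖ ^ 2) * p₀ +
            (2 * ((c * v) * (starRingEnd ℂ) p).re) ^ 2) / p₀ ^ 2) 0 := by
      rw [hG1_def]
      exact (hm1.add hm2).add hm3
    -- local minimum of G at 0
    have hmin' : ∀ᶠ z in nhds z₀, MQ φ z₀ ≤ MQ φ z := by
      have h := (hmin : ∀ᶠ z in nhdsWithin z₀ Ω, MQ φ z₀ ≤ MQ φ z)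
      exact (nhdsWithin_eq_nhds.mpr (hΩopen.mem_nhds hz₀)) ▸ h
    have hℓcont : Filter.Tendsto ℓ (nhds 0) (nhds z₀) := by
      rw [← hℓ0]
      exact (continuous_const.add (Complex.continuous_ofReal.mul continuous_const)).tendsto 0
    have hminℓ : ∀ᶠ t in nhds (0:ℝ), MQ φ z₀ ≤ MQ φ (ℓ t) := hℓcont.eventually hmin'
    have hGlog : ∀ t : ℝ, |t| < r → G t = Real.log (MQ φ (ℓ t)) := by
      intro t ht
      have hz := hballΩ _ (hball t ht)
      have habs' : 0 < ‖deriv φ (ℓ t)‖ := norm_pos_iff.mpr (hφ' _ hz)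
      have hMQeq : MQ φ (ℓ t) = ‖deriv φ (ℓ t)‖ * P t / (1 - w t) := by
        rw [hPeq t, hw_def]
        rfl
      rw [hMQeq, Real.log_div (ne_of_gt (mul_pos habs' (hPpos t ht))) (ne_of_gt (hwpos t ht)),
        Real.log_mul (ne_of_gt habs') (ne_of_gt (hPpos t ht)), hG_def]
      simp only
      rw [hLre _ (hball t ht)]
      ring
    have hMQpos : 0 < MQ φ z₀ := by
      have : MQ φ z₀ = ‖c‖ * c₀ / p₀ := rfl
      rw [this]; positivity
    have hGmin : IsLocalMin G 0 := by
      have hrev : ∀ᶠ t in nhds (0:ℝ), |t| < r := by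
        have : Set.Ioo (-r) r ∈ nhds (0:ℝ) := Ioo_mem_nhds (by linarith) hrpos
        filter_upwards [this] with t ht
        rw [abs_lt]; exact ⟨ht.1, ht.2⟩
      filter_upwards [hminℓ, hrev] with t hle htr
      rw [hGlog t htr, hGlog 0 (by simpa using hrpos), hℓ0]
      exact Real.log_le_log hMQpos hle
    have hG1nhds : ∀ᶠ t in nhds (0:ℝ), HasDerivAt G (G1 t) t := by
      have hrev : ∀ᶠ t in nhds (0:ℝ), |t| < r := by
        have : Set.Ioo (-r) r ∈ nhds (0:ℝ) := Ioo_mem_nhds (by linarith) hrpos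
        filter_upwards [this] with t ht
        rw [abs_lt]; exact ⟨ht.1, ht.2⟩
      filter_upwards [hrev] with t ht
      exact hG1ev t ht
    exact local_min_second_deriv_nonneg hG1nhds hG2 hGmin
  have k1 := key 1 (by simp)
  have kI := key Complex.I (by simp)
  -- combine
  have habs2 : (z₀ * (starRingEnd ℂ) (1:ℂ)).re ^ 2 + (z₀ * (starRingEnd ℂ) Complex.I).re ^ 2
      = ‖z₀‖ ^ 2 := by
    simp [Complex.mul_re, Complex.conj_re, Complex.conj_im, Complex.sq_norm, Complex.normSq_apply]
    ring
  have hcp2 : ((c * 1) * (starRingEnd ℂ) p).re ^ 2 + ((c * Complex.I) * (starRingEnd ℂ) p).re ^ 2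
      = ‖c‖ ^ 2 * ‖p‖ ^ 2 := by
    simp [Complex.mul_re, Complex.mul_im, Complex.conj_re, Complex.conj_im,
      Complex.sq_norm, Complex.normSq_apply]
    ring
  have hI2 : (Λ * Complex.I ^ 2).re = -(Λ * 1 ^ 2).re := by
    simp [Complex.I_sq]
  have hQI2 : ((Q * Complex.I ^ 2) * (starRingEnd ℂ) p).re = -((Q * 1 ^ 2) * (starRingEnd ℂ) p).re := by
    simp [Complex.I_sq]
  have hsum : 0 ≤ -4 / c₀ ^ 2 + 4 * ‖c‖ ^ 2 / p₀ ^ 2 := by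
    have h1 : ‖z₀‖ ^ 2 = 1 - c₀ := by rw [hc₀_def]; ring
    have h2 : ‖p‖ ^ 2 = 1 - p₀ := by rw [hp₀_def]; ring
    have h3 : (z₀ * (starRingEnd ℂ) (1:ℂ)).re ^ 2 + (z₀ * (starRingEnd ℂ) Complex.I).re ^ 2
        = 1 - c₀ := by rw [habs2, h1]
    have h4 : ((c * 1) * (starRingEnd ℂ) p).re ^ 2 + ((c * Complex.I) * (starRingEnd ℂ) p).re ^ 2
        = ‖c‖ ^ 2 * (1 - p₀) := by rw [hcp2, h2]
    have e2 := kI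
    rw [hI2, hQI2] at e2
    have hadd := add_nonneg k1 e2
    have heq : ((Λ * 1 ^ 2).re + (-2 * c₀ - 4 * ((z₀ * (starRingEnd ℂ) (1:ℂ)).re) ^ 2) / c₀ ^ 2 +
        ((2 * ((Q * 1 ^ 2) * (starRingEnd ℂ) p).re + 2 * ‖c‖ ^ 2) * p₀ +
          (2 * ((c * 1) * (starRingEnd ℂ) p).re) ^ 2) / p₀ ^ 2) +
        (-(Λ * 1 ^ 2).re + (-2 * c₀ - 4 * ((z₀ * (starRingEnd ℂ) Complex.I).re) ^ 2) / c₀ ^ 2 +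
        ((2 * -((Q * 1 ^ 2) * (starRingEnd ℂ) p).re + 2 * ‖c‖ ^ 2) * p₀ +
          (2 * ((c * Complex.I) * (starRingEnd ℂ) p).re) ^ 2) / p₀ ^ 2)
        = (-4 * c₀ - 4 * ((z₀ * (starRingEnd ℂ) (1:ℂ)).re ^ 2 + (z₀ * (starRingEnd ℂ) Complex.I).re ^ 2)) / c₀ ^ 2 +
          (4 * ‖c‖ ^ 2 * p₀ + 4 * (((c * 1) * (starRingEnd ℂ) p).re ^ 2 + ((c * Complex.I) * (starRingEnd ℂ) p).re ^ 2)) / p₀ ^ 2 := by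
      ring
    rw [heq, h3, h4] at hadd
    have heq2 : (-4 * c₀ - 4 * (1 - c₀)) / c₀ ^ 2 +
        (4 * ‖c‖ ^ 2 * p₀ + 4 * (‖c‖ ^ 2 * (1 - p₀))) / p₀ ^ 2
        = -4 / c₀ ^ 2 + 4 * ‖c‖ ^ 2 / p₀ ^ 2 := by ring
    rw [heq2] at hadd
    exact hadd
  have hfinal : p₀ ≤ ‖c‖ * c₀ := by
    have hc₀2 : (0:ℝ) < c₀ ^ 2 := by positivity
    have hp₀2 : (0:ℝ) < p₀ ^ 2 := by positivity
    have h5 : 4 / c₀ ^ 2 ≤ 4 * ‖c‖ ^ 2 / p₀ ^ 2 := by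
      have h' : (-4:ℝ)/c₀^2 = -(4/c₀^2) := by ring
      rw [h'] at hsum; linarith
    have h6 : 4 * p₀ ^ 2 ≤ 4 * ‖c‖ ^ 2 * c₀ ^ 2 := by
      rw [div_le_div_iff₀ hc₀2 hp₀2] at h5
      linarith
    nlinarith [mul_pos hcabs hc₀pos, hp₀pos]
  have hMQ : MQ φ z₀ = ‖c‖ * c₀ / p₀ := rfl
  rw [hMQ, le_div_iff₀ hp₀pos, one_mul]
  exact hfinal
end
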